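/- Let F be a finite field of characteristic different from 2 and n a positive integer. Then the set S_n of all n-by-n diagonal matrices over F whose diagonal entries all equal 1 or -1 (signature matrices) is a maximal independent set of the unit graph of the matrix ring M_n(F). -/

import Mathlib

open Pointwise

/-- The unit graph of a ring: distinct `x, y` adjacent iff `x + y` is a unit. -/
def unitGraph (R : Type*) [Ring R] : SimpleGraph R where
  Adj x y := x ≠ y ∧ IsUnit (x + y)
  symm := by
    refine ⟨?_⟩
    rintro x y ⟨h1, h2⟩
    exact ⟨h1.symm, by rwa [add_comm]⟩
  loopless := by refine ⟨?_⟩; rintro x ⟨h, _⟩; exact h rfl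

/-- The unitary Cayley graph of a ring: distinct `x, y` adjacent iff `x - y` is a unit. -/
def cayleyGraph (R : Type*) [Ring R] : SimpleGraph R where
  Adj x y := x ≠ y ∧ IsUnit (x - y)
  symm := by
    refine ⟨?_⟩
    rintro x y ⟨h1, h2⟩
    refine ⟨h1.symm, ?_⟩
    rw [← neg_sub]
    exact h2.neg
  loopless := by refine ⟨?_⟩; rintro x ⟨h, _⟩; exact h rfl

/-- A set of vertices is independent if no two of its elements are adjacent. -/
def IsIndepSet {V : Type*} (G : SimpleGraph V) (A : Set V) : Prop :=
  ∀ ⦃x⦄, x ∈ A → ∀ ⦃y⦄, y ∈ A → ¬ G.Adj x y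

/-- A maximal independent set. -/
def IsMaxIndepSet {V : Type*} (G : SimpleGraph V) (A : Set V) : Prop :=
  IsIndepSet G A ∧ ∀ B, IsIndepSet G B → A ⊆ B → A = B

/-- A graph is well-covered if all maximal independent sets have the same cardinality. -/
def WellCovered {V : Type*} (G : SimpleGraph V) : Prop :=
  ∀ A B : Set V, IsMaxIndepSet G A → IsMaxIndepSet G B → A.ncard = B.ncard


lemma exists_sign {F : Type*} [Field F] (h2 : (2:F) ≠ 0) :
    ∀ (n : ℕ) (M : Matrix (Fin n) (Fin n) F), ∃ d : Fin n → F,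
      (∀ i, d i = 1 ∨ d i = -1) ∧ (M + Matrix.diagonal d).det ≠ 0 := by
  intro n
  induction n with
  | zero =>
      intro M
      exact ⟨fun _ => 1, fun i => i.elim0, by simp [Matrix.det_isEmpty]⟩
  | succ n ih =>
      intro M
      obtain ⟨d', hd', hdet⟩ := ih (M.submatrix Fin.castSucc Fin.castSucc)
      set N : F → Matrix (Fin (n+1)) (Fin (n+1)) F :=
        fun t => M + Matrix.diagonal (Fin.snoc d' t) with hN
      have hupd : ∀ t : F, N t = (N 0).updateCol (Fin.last n)
          ((fun i => (N 0) i (Fin.last n)) + (t • (Pi.single (Fin.last n) (1:F) : Fin (n+1) → F))) := by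
        intro t
        ext i j
        by_cases hj : j = Fin.last n
        · subst hj
          simp only [Matrix.updateCol_apply, if_pos rfl, Pi.add_apply, Pi.smul_apply,
            hN, Matrix.add_apply, Matrix.diagonal_apply]
          by_cases hi : i = Fin.last n
          · subst hi; simp [Fin.snoc_last]
          · simp [hi, Pi.single_apply, hi]
        · obtain ⟨k, rfl⟩ := Fin.exists_castSucc_eq.mpr hj
          simp [Matrix.updateCol_apply, (Fin.castSucc_lt_last k).ne, hN,
            Matrix.diagonal_apply, Fin.snoc_castSucc]
          by_cases hik : i = k.castSucc
          · simp [hik, Fin.snoc_castSucc]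
          · simp [hik]
      have hdetN : ∀ t : F, (N t).det = (N 0).det
          + t * ((N 0).updateCol (Fin.last n) ((Pi.single (Fin.last n) (1:F) : Fin (n+1) → F))).det := by
        intro t
        rw [hupd t, Matrix.det_updateCol_add, Matrix.det_updateCol_smul,
          Matrix.updateCol_eq_self]
      have hminor : ((N 0).updateCol (Fin.last n) ((Pi.single (Fin.last n) (1:F) : Fin (n+1) → F))).det
          = (M.submatrix Fin.castSucc Fin.castSucc + Matrix.diagonal d').det := by
        rw [Matrix.det_succ_column _ (Fin.last n)]
        rw [Finset.sum_eq_single (Fin.last n)]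
        · simp only [Matrix.updateCol_apply, if_pos rfl, Pi.single_eq_same]
          rw [Fin.succAbove_last]
          have : ((N 0).updateCol (Fin.last n) ((Pi.single (Fin.last n) (1:F) : Fin (n+1) → F))).submatrix
              Fin.castSucc Fin.castSucc
              = M.submatrix Fin.castSucc Fin.castSucc + Matrix.diagonal d' := by
            ext i j
            have hne : Fin.castSucc j ≠ Fin.last n := (Fin.castSucc_lt_last j).ne
            simp [Matrix.updateCol_apply, hne, hN, Matrix.diagonal_apply,
              Fin.snoc_castSucc, Fin.castSucc_inj]
          rw [this]
          have : ((-1 : F)) ^ ((Fin.last n : ℕ) + (Fin.last n : ℕ)) = 1 := by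
            rw [← two_mul]; exact (Even.neg_one_pow ⟨n, two_mul n⟩)
          rw [this]; simp
        · intro b _ hb
          simp [Matrix.updateCol_apply, Pi.single_eq_of_ne hb]
        · intro h; exact absurd (Finset.mem_univ _) h
      have key : (N 1).det ≠ 0 ∨ (N (-1)).det ≠ 0 := by
        by_contra h
        push_neg at h
        have h1 := hdetN 1
        have h2' := hdetN (-1)
        rw [h.1] at h1; rw [h.2] at h2'
        rw [hminor] at h1 h2'
        have : (2:F) * (M.submatrix Fin.castSucc Fin.castSucc + Matrix.diagonal d').det = 0 := by
          linear_combination -h1 + h2'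
        exact hdet (by
          rcases mul_eq_zero.mp this with h | h
          · exact absurd h h2
          · exact h)
      rcases key with h | h
      · refine ⟨Fin.snoc d' 1, ?_, h⟩
        intro i
        refine Fin.lastCases ?_ ?_ i
        · simp
        · intro j; simpa using hd' j
      · refine ⟨Fin.snoc d' (-1), ?_, h⟩
        intro i
        refine Fin.lastCases ?_ ?_ i
        · simp
        · intro j; simpa using hd' j

theorem stmt_3 {F : Type*} [Field F] [Fintype F] (hF : ringChar F ≠ 2)
    (n : ℕ) (hn : 0 < n) :
    IsMaxIndepSet (unitGraph (Matrix (Fin n) (Fin n) F))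
      {M | ∃ d : Fin n → F, (∀ i, d i = 1 ∨ d i = -1) ∧ M = Matrix.diagonal d} := by
  constructor
  · rintro x ⟨d, hd, rfl⟩ y ⟨e, he, rfl⟩ ⟨hne, hu⟩
    have hi : ∃ i, d i ≠ e i := by
      by_contra h
      push_neg at h
      exact hne (by rw [funext h])
    obtain ⟨i, hi⟩ := hi
    have hz : d i + e i = 0 := by
      rcases hd i with h1 | h1 <;> rcases he i with h2 | h2 <;>
        simp [h1, h2] at hi ⊢
    rw [Matrix.isUnit_iff_isUnit_det] at hu
    have hdet0 : (Matrix.diagonal d + Matrix.diagonal e).det = 0 := by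
      rw [Matrix.diagonal_add, Matrix.det_diagonal]
      exact Finset.prod_eq_zero (Finset.mem_univ i) (by simpa using hz)
    rw [hdet0] at hu
    simpa using hu
  · intro B hB hSB
    refine Set.Subset.antisymm hSB ?_
    intro M hM
    have h2 : (2:F) ≠ 0 := Ring.two_ne_zero hF
    obtain ⟨d, hd, hdet⟩ := exists_sign h2 n M
    have hdS : Matrix.diagonal d ∈
        {M | ∃ d : Fin n → F, (∀ i, d i = 1 ∨ d i = -1) ∧ M = Matrix.diagonal d} :=
      ⟨d, hd, rfl⟩
    by_contra hMS
    have hne : M ≠ Matrix.diagonal d := fun h => hMS ⟨d, hd, h⟩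
    exact hB hM (hSB hdS)
      ⟨hne, (Matrix.isUnit_iff_isUnit_det _).mpr (isUnit_iff_ne_zero.mpr hdet)⟩
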